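/- Let n ≥ 2, let E_1, …, E_n be Banach spaces over 𝕂 (= ℝ or ℂ), let A : E_1 × ⋯ × E_n → 𝕂 be a continuous n-linear form, and let A_{n−1} : E_1 × ⋯ × E_{n−1} → E_n' be the associated (n−1)-linear map defined by A_{n−1}(x^1,…,x^{n−1})(x^n) = A(x^1,…,x^n). If A is absolutely (1;2,…,2)-summing, then A_{n−1} is almost summing. -/

import Mathlib

open scoped BigOperators NNReal ENNReal

noncomputable def weakNorm (𝕜 : Type*) [RCLike 𝕜] {E : Type*} [NormedAddCommGroup E]
    [NormedSpace 𝕜 E] (r : ℝ) {m : ℕ} (x : Fin m → E) : ℝ :=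
  ⨆ φ : {φ : E →L[𝕜] 𝕜 // ‖φ‖ ≤ 1}, (∑ j, ‖φ.1 (x j)‖ ^ r) ^ (1 / r)

noncomputable def radNorm {E : Type*} [NormedAddCommGroup E] {m : ℕ} (x : Fin m → E) : ℝ :=
  ((∑ ε : Fin m → Bool, ‖∑ j, (if ε j then x j else -x j)‖ ^ 2) / (2 : ℝ) ^ m) ^ ((1 : ℝ) / 2)

lemma sign_orth {m : ℕ} (j k : Fin m) :
    ∑ ε : Fin m → Bool, (if ε j then (1:ℝ) else -1) * (if ε k then (1:ℝ) else -1)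
      = if j = k then (2:ℝ)^m else 0 := by
  rcases eq_or_ne j k with rfl | hjk
  · simp only [if_pos rfl]
    have : ∀ ε : Fin m → Bool,
        (if ε j then (1:ℝ) else -1) * (if ε j then (1:ℝ) else -1) = 1 := by
      intro ε; by_cases h : ε j <;> simp [h]
    rw [Finset.sum_congr rfl fun ε _ => this ε]
    simp [Finset.card_univ, Fintype.card_fun]
  · rw [if_neg hjk]
    apply Finset.sum_ninvolution (fun ε => Function.update ε j (!(ε j)))
    · intro ε
      have h1 : Function.update ε j (!(ε j)) j = !(ε j) := Function.update_self _ _ _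
      have h2 : Function.update ε j (!(ε j)) k = ε k := Function.update_of_ne (Ne.symm hjk) _ _
      rw [h1, h2]
      by_cases hj : ε j <;> by_cases hk : ε k <;> simp [hj, hk]
    · intro ε _
      intro h
      have := congrFun h j
      simp at this
    · intro ε; exact Finset.mem_univ _
    · intro ε
      funext i
      rcases eq_or_ne i j with rfl | hij
      · simp
      · simp [Function.update_of_ne hij]

open RCLike in
lemma bessel_signs {𝕜 : Type*} [RCLike 𝕜] {m : ℕ} (a : (Fin m → Bool) → 𝕜) :
    ∑ j : Fin m, ‖∑ ε : Fin m → Bool, (if ε j then a ε else -a ε)‖ ^ 2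
      ≤ (2:ℝ)^m * ∑ ε : Fin m → Bool, ‖a ε‖ ^ 2 := by
  classical
  set N : ℝ := (2:ℝ)^m with hN
  have hN0 : 0 < N := by positivity
  set c : ℝ := (Real.sqrt N)⁻¹ with hc
  have hc0 : 0 < c := by positivity
  have hc2 : c^2 = N⁻¹ := by
    rw [hc, ← Real.sqrt_inv]
    exact Real.sq_sqrt (by positivity)
  set v : Fin m → EuclideanSpace 𝕜 (Fin m → Bool) :=
    fun j => (WithLp.equiv 2 _).symm (fun ε => ((c * (if ε j then (1:ℝ) else -1) : ℝ) : 𝕜)) with hv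
  set A : EuclideanSpace 𝕜 (Fin m → Bool) := (WithLp.equiv 2 _).symm a with hA
  have hinner : ∀ j, (inner 𝕜 (v j) A : 𝕜)
      = (c : 𝕜) * ∑ ε : Fin m → Bool, (if ε j then a ε else -a ε) := by
    intro j
    rw [PiLp.inner_apply]
    rw [Finset.mul_sum]
    apply Finset.sum_congr rfl
    intro ε _
    rw [RCLike.inner_apply']
    show (starRingEnd 𝕜) ((c * (if ε j then (1:ℝ) else -1) : ℝ) : 𝕜) * a ε = _
    rw [RCLike.conj_ofReal]
    by_cases h : ε j <;> simp only [h, if_true, if_false, ite_true, ite_false] <;> push_cast <;> ring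
  have horth : Orthonormal 𝕜 v := by
    rw [orthonormal_iff_ite]
    intro i j
    rw [PiLp.inner_apply]
    have : ∀ ε : Fin m → Bool, (inner 𝕜 (v i ε) (v j ε) : 𝕜)
        = ((c * (if ε i then (1:ℝ) else -1) * (c * (if ε j then (1:ℝ) else -1)) : ℝ) : 𝕜) := by
      intro ε
      rw [RCLike.inner_apply']
      show (starRingEnd 𝕜) ((c * (if ε i then (1:ℝ) else -1) : ℝ) : 𝕜)
          * ((c * (if ε j then (1:ℝ) else -1) : ℝ) : 𝕜) = _
      rw [RCLike.conj_ofReal]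
      push_cast
      ring
    rw [Finset.sum_congr rfl fun ε _ => this ε, ← RCLike.ofReal_sum]
    have : ∑ ε : Fin m → Bool, c * (if ε i then (1:ℝ) else -1) * (c * (if ε j then (1:ℝ) else -1))
        = c^2 * ∑ ε : Fin m → Bool, (if ε i then (1:ℝ) else -1) * (if ε j then (1:ℝ) else -1) := by
      rw [Finset.mul_sum]; apply Finset.sum_congr rfl; intro ε _; ring
    rw [this, sign_orth i j]
    rcases eq_or_ne i j with rfl | hij
    · rw [← hN]; simp [hc2, inv_mul_cancel₀ hN0.ne']
    · simp [hij]
  have hbessel := horth.sum_inner_products_le (s := Finset.univ) A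
  have hnormA : ‖A‖^2 = ∑ ε : Fin m → Bool, ‖a ε‖^2 := by
    rw [EuclideanSpace.norm_eq]
    rw [Real.sq_sqrt (Finset.sum_nonneg fun ε _ => by positivity)]
    rfl
  have hterm : ∀ j, ‖(inner 𝕜 (v j) A : 𝕜)‖^2
      = c^2 * ‖∑ ε : Fin m → Bool, (if ε j then a ε else -a ε)‖^2 := by
    intro j
    rw [hinner j, norm_mul, mul_pow, RCLike.norm_ofReal, abs_of_pos hc0]
  rw [Finset.sum_congr rfl fun j _ => hterm j, ← Finset.mul_sum, hnormA, hc2] at hbessel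
  calc ∑ j : Fin m, ‖∑ ε : Fin m → Bool, (if ε j then a ε else -a ε)‖ ^ 2
      = N * (N⁻¹ * ∑ j : Fin m, ‖∑ ε : Fin m → Bool, (if ε j then a ε else -a ε)‖ ^ 2) := by
        field_simp
    _ ≤ N * ∑ ε : Fin m → Bool, ‖a ε‖ ^ 2 := by
        apply mul_le_mul_of_nonneg_left hbessel hN0.le

set_option maxHeartbeats 1000000 in
lemma radNorm_le_of_dual {𝕜 : Type*} [RCLike 𝕜] {F : Type*} [NormedAddCommGroup F]
    [NormedSpace 𝕜 F] {m : ℕ} (lam : Fin m → (F →L[𝕜] 𝕜)) (T : ℝ) (hT : 0 ≤ T)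
    (h : ∀ z : Fin m → F, ∑ j, ‖(lam j) (z j)‖ ≤ T * weakNorm 𝕜 2 z) :
    radNorm lam ≤ T := by
  classical
  set S : (Fin m → Bool) → (F →L[𝕜] 𝕜) := fun ε => ∑ j, (if ε j then lam j else -lam j) with hS
  set Q : ℝ := (∑ ε : Fin m → Bool, ‖S ε‖ ^ 2) / (2:ℝ) ^ m with hQ
  have hQ0 : 0 ≤ Q := by positivity
  have hRrad : radNorm lam = Q ^ ((1:ℝ)/2) := rfl
  set R : ℝ := Q ^ ((1:ℝ)/2) with hR
  have hR0 : 0 ≤ R := Real.rpow_nonneg hQ0 _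
  have hR2 : R ^ 2 = Q := by
    rw [hR, ← Real.rpow_natCast (Q ^ ((1:ℝ)/2)) 2, ← Real.rpow_mul hQ0]
    norm_num
  -- main estimate
  have key : Q ≤ T * R := by
    apply le_of_forall_pos_le_add
    intro δ hδ
    set D : ℝ := (∑ ε : Fin m → Bool, ‖S ε‖) / (2:ℝ) ^ m with hD
    have hD0 : 0 ≤ D := by positivity
    set δ₀ : ℝ := δ / (D + 1) with hδ₀def
    have hδ₀ : 0 < δ₀ := by positivity
    -- choose near-norming points
    have hy : ∀ ε : Fin m → Bool, ∃ y : F, ‖y‖ ≤ 1 ∧ ‖S ε‖ ≤ ‖S ε y‖ + δ₀ := by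
      intro ε
      by_cases hε : ‖S ε‖ ≤ δ₀
      · exact ⟨0, by simp, by simpa using hε⟩
      · have hlt : ‖S ε‖ - δ₀ < ‖S ε‖ := by linarith
        obtain ⟨y, hy1, hy2⟩ := (S ε).exists_lt_apply_of_lt_opNorm hlt
        exact ⟨y, hy1.le, by linarith⟩
    choose y hy1 hy2 using hy
    -- choose unimodular multipliers
    have hd : ∀ ε : Fin m → Bool, ∃ d : 𝕜, ‖d‖ ≤ 1 ∧
        d * (S ε (y ε)) = ((‖S ε (y ε)‖ : ℝ) : 𝕜) := by
      intro ε
      by_cases hz : S ε (y ε) = 0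
      · exact ⟨0, by simp, by simp [hz]⟩
      · refine ⟨(starRingEnd 𝕜) (S ε (y ε)) * ((‖S ε (y ε)‖ : ℝ) : 𝕜)⁻¹, ?_, ?_⟩
        · rw [norm_mul, norm_inv, RCLike.norm_conj, RCLike.norm_ofReal,
            abs_of_nonneg (norm_nonneg _)]
          rw [mul_inv_cancel₀ (norm_ne_zero_iff.mpr hz)]
        · rw [mul_comm ((starRingEnd 𝕜) _), mul_assoc, RCLike.conj_mul]
          rw [← RCLike.ofReal_inv, ← RCLike.ofReal_pow, ← RCLike.ofReal_mul]
          congr 1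
          field_simp [norm_ne_zero_iff.mpr hz]
    choose d hd1 hd2 using hd
    set w : (Fin m → Bool) → F := fun ε => (((‖S ε‖ : ℝ) : 𝕜) * d ε) • y ε with hw
    have hwnorm : ∀ ε, ‖w ε‖ ≤ ‖S ε‖ := by
      intro ε
      rw [hw]
      simp only
      rw [norm_smul, norm_mul, RCLike.norm_ofReal, abs_of_nonneg (norm_nonneg _)]
      calc ‖S ε‖ * ‖d ε‖ * ‖y ε‖ ≤ ‖S ε‖ * 1 * 1 := by
            apply mul_le_mul (mul_le_mul le_rfl (hd1 ε) (norm_nonneg _) (norm_nonneg _))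
              (hy1 ε) (norm_nonneg _) (by positivity)
        _ = ‖S ε‖ := by ring
    have hSw : ∀ ε, S ε (w ε) = ((‖S ε‖ * ‖S ε (y ε)‖ : ℝ) : 𝕜) := by
      intro ε
      rw [hw]
      simp only
      rw [(S ε).map_smul, smul_eq_mul, mul_assoc, hd2 ε, ← RCLike.ofReal_mul]
    set z : Fin m → F := fun j =>
      ((((2:ℝ)^m)⁻¹ : ℝ) : 𝕜) • ∑ ε : Fin m → Bool, (if ε j then w ε else -w ε) with hz
    -- evaluation of functionals on z
    have hφz : ∀ (ψ : F →L[𝕜] 𝕜) (j : Fin m),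
        ψ (z j) = ((((2:ℝ)^m)⁻¹ : ℝ) : 𝕜) * ∑ ε : Fin m → Bool,
          (if ε j then ψ (w ε) else -(ψ (w ε))) := by
      intro ψ j
      rw [hz]
      simp only
      rw [map_smul, smul_eq_mul, map_sum]
      congr 1
      apply Finset.sum_congr rfl
      intro ε _
      by_cases h' : ε j <;> simp [h']
    -- S ε applied to w ε as a sum over j
    have hSapp : ∀ ε, S ε (w ε) = ∑ j, (if ε j then (lam j) (w ε) else -((lam j) (w ε))) := by
      intro ε
      rw [hS]
      simp only [ContinuousLinearMap.sum_apply]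
      apply Finset.sum_congr rfl
      intro j _
      by_cases h' : ε j <;> simp [h']
    -- the key identity
    have hkey : ∑ j, (lam j) (z j)
        = ((((2:ℝ)^m)⁻¹ : ℝ) : 𝕜) * ∑ ε : Fin m → Bool, S ε (w ε) := by
      rw [Finset.sum_congr rfl fun j _ => hφz (lam j) j, ← Finset.mul_sum]
      congr 1
      rw [Finset.sum_comm]
      apply Finset.sum_congr rfl
      intro ε _
      exact (hSapp ε).symm
    have hsumreal : ∑ ε : Fin m → Bool, S ε (w ε)
        = ((∑ ε : Fin m → Bool, ‖S ε‖ * ‖S ε (y ε)‖ : ℝ) : 𝕜) := by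
      rw [RCLike.ofReal_sum]
      exact Finset.sum_congr rfl fun ε _ => hSw ε
    have hnorm_eq : ‖∑ j, (lam j) (z j)‖
        = (∑ ε : Fin m → Bool, ‖S ε‖ * ‖S ε (y ε)‖) / (2:ℝ)^m := by
      rw [hkey, hsumreal, norm_mul, RCLike.norm_ofReal, RCLike.norm_ofReal,
        abs_of_nonneg (by positivity),
        abs_of_nonneg (Finset.sum_nonneg fun ε _ => by positivity)]
      rw [div_eq_inv_mul]
    -- weakNorm z ≤ R
    have hweak : weakNorm 𝕜 2 z ≤ R := by
      apply Real.iSup_le _ hR0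
      rintro ⟨φ, hφ⟩
      simp only
      rw [hR]
      apply Real.rpow_le_rpow (Finset.sum_nonneg fun j _ => Real.rpow_nonneg (norm_nonneg _) _)
        _ (by norm_num)
      have hcast : ∀ j : Fin m, ‖φ (z j)‖ ^ (2:ℝ) = ‖φ (z j)‖ ^ (2:ℕ) := by
        intro j
        rw [← Real.rpow_natCast]
        norm_num
      rw [Finset.sum_congr rfl fun j _ => hcast j]
      -- now a natural-power estimate
      have hb := bessel_signs (fun ε => φ (w ε))
      have h1 : ∀ j : Fin m, ‖φ (z j)‖ ^ (2:ℕ)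
          = (((2:ℝ)^m)⁻¹)^2 * ‖∑ ε : Fin m → Bool, (if ε j then φ (w ε) else -(φ (w ε)))‖ ^ 2 := by
        intro j
        rw [hφz φ j, norm_mul, RCLike.norm_ofReal, abs_of_nonneg (by positivity), mul_pow]
      rw [Finset.sum_congr rfl fun j _ => h1 j, ← Finset.mul_sum]
      have h2 : ∑ ε : Fin m → Bool, ‖φ (w ε)‖ ^ 2 ≤ ∑ ε : Fin m → Bool, ‖S ε‖ ^ 2 := by
        apply Finset.sum_le_sum
        intro ε _
        apply pow_le_pow_left₀ (norm_nonneg _)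
        calc ‖φ (w ε)‖ ≤ ‖φ‖ * ‖w ε‖ := φ.le_opNorm _
          _ ≤ 1 * ‖S ε‖ := mul_le_mul hφ (hwnorm ε) (norm_nonneg _) zero_le_one
          _ = ‖S ε‖ := one_mul _
      calc (((2:ℝ)^m)⁻¹)^2 * ∑ j : Fin m,
            ‖∑ ε : Fin m → Bool, (if ε j then φ (w ε) else -(φ (w ε)))‖ ^ 2
          ≤ (((2:ℝ)^m)⁻¹)^2 * ((2:ℝ)^m * ∑ ε : Fin m → Bool, ‖φ (w ε)‖ ^ 2) := by
            apply mul_le_mul_of_nonneg_left hb (by positivity)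
        _ ≤ (((2:ℝ)^m)⁻¹)^2 * ((2:ℝ)^m * ∑ ε : Fin m → Bool, ‖S ε‖ ^ 2) := by
            apply mul_le_mul_of_nonneg_left (mul_le_mul_of_nonneg_left h2 (by positivity))
              (by positivity)
        _ = Q := by
            rw [hQ]
            field_simp
    -- assemble
    have hpt : ∀ ε : Fin m → Bool, ‖S ε‖^2 ≤ ‖S ε‖ * ‖S ε (y ε)‖ + δ₀ * ‖S ε‖ := by
      intro ε
      have h1 := mul_le_mul_of_nonneg_left (hy2 ε) (norm_nonneg (S ε))
      calc ‖S ε‖^2 = ‖S ε‖ * ‖S ε‖ := sq (‖S ε‖)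
        _ ≤ ‖S ε‖ * (‖S ε (y ε)‖ + δ₀) := h1
        _ = ‖S ε‖ * ‖S ε (y ε)‖ + δ₀ * ‖S ε‖ := by ring
    have hsum1 : ∑ ε : Fin m → Bool, ‖S ε‖^2
        ≤ ∑ ε : Fin m → Bool, ‖S ε‖ * ‖S ε (y ε)‖ + δ₀ * ∑ ε : Fin m → Bool, ‖S ε‖ := by
      rw [Finset.mul_sum, ← Finset.sum_add_distrib]
      exact Finset.sum_le_sum fun ε _ => hpt ε
    have step1 : Q ≤ (∑ ε : Fin m → Bool, ‖S ε‖ * ‖S ε (y ε)‖) / (2:ℝ)^m + δ₀ * D := by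
      rw [hQ, hD]
      rw [← mul_div_assoc, ← add_div]
      gcongr
    have step2 : (∑ ε : Fin m → Bool, ‖S ε‖ * ‖S ε (y ε)‖) / (2:ℝ)^m ≤ T * R := by
      rw [← hnorm_eq]
      calc ‖∑ j, (lam j) (z j)‖ ≤ ∑ j, ‖(lam j) (z j)‖ := norm_sum_le _ _
        _ ≤ T * weakNorm 𝕜 2 z := h z
        _ ≤ T * R := mul_le_mul_of_nonneg_left hweak hT
    have step3 : δ₀ * D ≤ δ := by
      have h3 : δ₀ * (D + 1) = δ := by
        rw [hδ₀def]
        field_simp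
      calc δ₀ * D ≤ δ₀ * (D + 1) :=
            mul_le_mul_of_nonneg_left (le_add_of_nonneg_right zero_le_one) hδ₀.le
        _ = δ := h3
    linarith
  -- conclude
  rw [hRrad]
  rcases eq_or_lt_of_le hR0 with hR0' | hRpos
  · rw [← hR0']; exact hT
  · have : R * R ≤ T * R := by nlinarith
    exact le_of_mul_le_mul_right this hRpos

lemma weakNorm_nonneg (𝕜 : Type*) [RCLike 𝕜] {E : Type*} [NormedAddCommGroup E]
    [NormedSpace 𝕜 E] (r : ℝ) {m : ℕ} (x : Fin m → E) : 0 ≤ weakNorm 𝕜 r x :=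
  Real.iSup_nonneg fun φ => Real.rpow_nonneg
    (Finset.sum_nonneg fun j _ => Real.rpow_nonneg (norm_nonneg _) _) _

/-- If a continuous `n`-linear form `A` (here with `n + 1` arguments, `n ≥ 1`) is absolutely
`(1; 2, …, 2)`-summing, then the associated `n`-linear map `A_{n}` into the dual of the last
space (characterized by `B v y = A (v, y)`) is almost summing. -/
theorem summing_implies_associated_almost_summing {𝕜 : Type*} [RCLike 𝕜] {n : ℕ} (hn : 1 ≤ n)
    (E : Fin (n + 1) → Type*) [∀ i, NormedAddCommGroup (E i)] [∀ i, NormedSpace 𝕜 (E i)]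
    [∀ i, CompleteSpace (E i)]
    (A : ContinuousMultilinearMap 𝕜 E 𝕜)
    (B : ContinuousMultilinearMap 𝕜 (fun i : Fin n => E i.castSucc)
      (E (Fin.last n) →L[𝕜] 𝕜))
    (hAB : ∀ (v : ∀ i : Fin n, E i.castSucc) (y : E (Fin.last n)), B v y = A (Fin.snoc v y))
    (hA : ∃ C > 0, ∀ (m : ℕ) (x : ∀ i, Fin m → E i),
      ∑ j, ‖A (fun i => x i j)‖ ≤ C * ∏ i, weakNorm 𝕜 2 (x i)) :
    ∃ C > 0, ∀ (m : ℕ) (x : ∀ i : Fin n, Fin m → E i.castSucc),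
      radNorm (fun j => B (fun i => x i j)) ≤ C * ∏ i, weakNorm 𝕜 2 (x i) := by
  obtain ⟨C, hC, hsum⟩ := hA
  refine ⟨C, hC, ?_⟩
  intro m x
  apply radNorm_le_of_dual
  · exact mul_nonneg hC.le (Finset.prod_nonneg fun i _ => weakNorm_nonneg 𝕜 2 (x i))
  · intro z
    set X : ∀ i : Fin (n + 1), Fin m → E i := Fin.snoc x z with hX
    have hXeq : ∀ j : Fin m,
        (fun i : Fin (n + 1) => X i j) = Fin.snoc (fun i => x i j) (z j) := by
      intro j
      funext i
      refine Fin.lastCases ?_ ?_ i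
      · simp [hX]
      · intro k
        simp [hX]
    calc ∑ j, ‖B (fun i => x i j) (z j)‖
        = ∑ j, ‖A (fun i => X i j)‖ := by
          apply Finset.sum_congr rfl
          intro j _
          rw [hAB, hXeq j]
      _ ≤ C * ∏ i : Fin (n + 1), weakNorm 𝕜 2 (X i) := hsum m X
      _ = C * ((∏ i : Fin n, weakNorm 𝕜 2 (x i)) * weakNorm 𝕜 2 z) := by
          rw [Fin.prod_univ_castSucc]
          congr 1
          congr 1
          · apply Finset.prod_congr rfl
            intro i _
            rw [hX]
            rw [Fin.snoc_castSucc]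
          · rw [hX]
            rw [Fin.snoc_last]
      _ = (C * ∏ i, weakNorm 𝕜 2 (x i)) * weakNorm 𝕜 2 z := by ring
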